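/- For a set R of n disks in the plane, if D ∈ R is 'potential' — meaning some realization of R has D's point as an extreme point of the convex hull and some realization does not — then D is 'unstable': there exists a fixed realization P' of R \ {D} and two points p, q ∈ D such that the lists of extreme points of conv(P' ∪ {p}) and conv(P' ∪ {q}) (identified by their disks, in counterclockwise order) differ. -/

import Mathlib

open Metric Set

/-- The vertices (extreme points) of the convex hull of a set `T`:
those `x ∈ T` with `x ∉ conv (T \ {x})`. -/
def hullVertices (T : Set (EuclideanSpace ℝ (Fin 2))) : Set (EuclideanSpace ℝ (Fin 2)) :=
  {x ∈ T | x ∉ convexHull ℝ (T \ {x})}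

/-- Moving each generating point by at most `M` moves the convex hull by at most `M`
(pointwise: every point of the old hull is within `M` of the new hull). -/
lemma stmt16_moveHull {n : ℕ} (i₀ : Fin n) (U : Set (Fin n))
    (f g : Fin n → EuclideanSpace ℝ (Fin 2)) (M : ℝ)
    (hM : ∀ i, dist (f i) (g i) ≤ M) {x : EuclideanSpace ℝ (Fin 2)}
    (hx : x ∈ convexHull ℝ (f '' U)) :
    ∃ x' ∈ convexHull ℝ (g '' U), dist x x' ≤ M := by
  classical
  rw [convexHull_eq] at hx
  obtain ⟨ι, t, w, z, hw0, hw1, hz, rfl⟩ := hx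
  have hch : ∀ j, ∃ i : Fin n, j ∈ t → (i ∈ U ∧ f i = z j) := by
    intro j
    by_cases hj : j ∈ t
    · obtain ⟨i, hiU, hif⟩ := hz j hj
      exact ⟨i, fun _ => ⟨hiU, hif⟩⟩
    · exact ⟨i₀, fun h => absurd h hj⟩
  choose σ hσ using hch
  refine ⟨t.centerMass w (fun j => g (σ j)), ?_, ?_⟩
  · exact Finset.centerMass_mem_convexHull _ hw0 (hw1 ▸ one_pos)
      (fun j hj => ⟨σ j, (hσ j hj).1, rfl⟩)
  · rw [Finset.centerMass_eq_of_sum_1 _ _ hw1, Finset.centerMass_eq_of_sum_1 _ _ hw1,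
      dist_eq_norm, ← Finset.sum_sub_distrib]
    calc ‖∑ j ∈ t, (w j • z j - w j • g (σ j))‖
        ≤ ∑ j ∈ t, ‖w j • z j - w j • g (σ j)‖ := norm_sum_le _ _
      _ ≤ ∑ j ∈ t, w j * M := by
          refine Finset.sum_le_sum fun j hj => ?_
          rw [← smul_sub, norm_smul, Real.norm_eq_abs, abs_of_nonneg (hw0 j hj)]
          have hb : ‖z j - g (σ j)‖ ≤ M := by
            rw [← (hσ j hj).2, ← dist_eq_norm]; exact hM _
          exact mul_le_mul_of_nonneg_left hb (hw0 j hj)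
      _ = M := by rw [← Finset.sum_mul, hw1, one_mul]

/-- If a disk `D = R i₀` is *potential* (some realization has `D`'s point as an extreme
point of the convex hull, and some realization does not), then `D` is *unstable*: there
is a fixed realization `P'` of the other disks and points `p, q ∈ D` for which the
combinatorial structures of the convex hulls of `P' ∪ {p}` and `P' ∪ {q}` differ —
either the hull vertices other than the point of `D` differ, or the point of `D` is a
hull vertex in one case but not in the other. -/
theorem stmt16 (n : ℕ) (c : Fin n → EuclideanSpace ℝ (Fin 2)) (r : Fin n → ℝ)
    (hr : ∀ i, 0 < r i) (i₀ : Fin n)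
    (hpot1 : ∃ P : Fin n → EuclideanSpace ℝ (Fin 2),
      (∀ i, P i ∈ closedBall (c i) (r i)) ∧
      P i₀ ∉ convexHull ℝ (Set.range P \ {P i₀}))
    (hpot2 : ∃ P : Fin n → EuclideanSpace ℝ (Fin 2),
      (∀ i, P i ∈ closedBall (c i) (r i)) ∧
      P i₀ ∈ convexHull ℝ (Set.range P \ {P i₀})) :
    ∃ P' : Fin n → EuclideanSpace ℝ (Fin 2),
      (∀ i, i ≠ i₀ → P' i ∈ closedBall (c i) (r i)) ∧
      ∃ p ∈ closedBall (c i₀) (r i₀), ∃ q ∈ closedBall (c i₀) (r i₀),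
        ¬ (hullVertices (insert p (P' '' {i | i ≠ i₀})) \ {p}
              = hullVertices (insert q (P' '' {i | i ≠ i₀})) \ {q}
            ∧ (p ∈ hullVertices (insert p (P' '' {i | i ≠ i₀}))
              ↔ q ∈ hullVertices (insert q (P' '' {i | i ≠ i₀})))) := by
  classical
  obtain ⟨P1, hP1mem, hP1ex⟩ := hpot1
  obtain ⟨P2, hP2mem, hP2in⟩ := hpot2
  set c₀ := c i₀ with hc₀
  set r₀ := r i₀ with hr₀def
  have hr₀ : 0 < r₀ := hr i₀
  set B : Set (EuclideanSpace ℝ (Fin 2)) := closedBall c₀ r₀ with hBdef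
  set Pt : ℝ → Fin n → EuclideanSpace ℝ (Fin 2) :=
    fun t i => (1 - t) • P1 i + t • P2 i with hPtdef
  set S : ℝ → Set (EuclideanSpace ℝ (Fin 2)) := fun t => Pt t '' {i | i ≠ i₀} with hSdef
  have hPt0 : Pt 0 = P1 := by funext i; simp [hPtdef]
  have hPt1 : Pt 1 = P2 := by funext i; simp [hPtdef]
  -- there is an index other than i₀
  have hj₀ : ∃ j : Fin n, j ≠ i₀ := by
    by_contra h
    push_neg at h
    have hemp : Set.range P2 \ {P2 i₀} = ∅ := by
      ext x
      simp only [mem_diff, mem_range, mem_singleton_iff, mem_empty_iff_false, iff_false,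
        not_and, not_not]
      rintro ⟨j, rfl⟩
      rw [h j]
    rw [hemp] at hP2in
    simp at hP2in
  obtain ⟨j₀, hj₀⟩ := hj₀
  have hSfin : ∀ t, (S t).Finite := fun t => (Set.toFinite _).image _
  have hSne : ∀ t, (S t).Nonempty := fun t => ⟨Pt t j₀, j₀, hj₀, rfl⟩
  have hCcomp : ∀ t, IsCompact (convexHull ℝ (S t)) := fun t => (hSfin t).isCompact_convexHull ℝ
  have hCne : ∀ t, (convexHull ℝ (S t)).Nonempty :=
    fun t => (hSne t).mono (subset_convexHull ℝ _)
  have hCclosed : ∀ t, IsClosed (convexHull ℝ (S t)) := fun t => (hCcomp t).isClosed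
  -- the Lipschitz constant
  set M : ℝ := 1 + ∑ i : Fin n, dist (P1 i) (P2 i) with hMdef
  have hM1 : 1 ≤ M := by
    have : 0 ≤ ∑ i : Fin n, dist (P1 i) (P2 i) :=
      Finset.sum_nonneg fun i _ => dist_nonneg
    simp [hMdef]; linarith
  have hMpos : 0 < M := by linarith
  have hPtdist : ∀ t t' i, dist (Pt t i) (Pt t' i) ≤ M * |t - t'| := by
    intro t t' i
    have he : Pt t i - Pt t' i = (t - t') • (P2 i - P1 i) := by
      simp only [hPtdef]
      module
    rw [dist_eq_norm, he, norm_smul, Real.norm_eq_abs]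
    have h1 : ‖P2 i - P1 i‖ ≤ M := by
      have := Finset.single_le_sum (f := fun i => dist (P1 i) (P2 i))
        (fun i _ => dist_nonneg) (Finset.mem_univ i)
      rw [← dist_eq_norm, dist_comm]
      simp [hMdef]; linarith
    calc |t - t'| * ‖P2 i - P1 i‖ ≤ |t - t'| * M :=
          mul_le_mul_of_nonneg_left h1 (abs_nonneg _)
      _ = M * |t - t'| := mul_comm _ _
  -- transfer of infDist along the homotopy
  have htrans : ∀ (y : EuclideanSpace ℝ (Fin 2)) t t',
      infDist y (convexHull ℝ (S t')) ≤ infDist y (convexHull ℝ (S t)) + M * |t - t'| := by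
    intro y t t'
    obtain ⟨x, hxC, hxd⟩ := (hCcomp t).exists_infDist_eq_dist (hCne t) y
    obtain ⟨x', hx'C, hxx'⟩ := stmt16_moveHull i₀ {i | i ≠ i₀} (Pt t) (Pt t')
      (M * |t - t'|) (fun i => hPtdist t t' i) hxC
    calc infDist y (convexHull ℝ (S t')) ≤ dist y x' := infDist_le_dist_of_mem hx'C
      _ ≤ dist y x + dist x x' := dist_triangle _ _ _
      _ ≤ infDist y (convexHull ℝ (S t)) + M * |t - t'| := by rw [← hxd]; linarith
  -- the two test points
  set y₁ : EuclideanSpace ℝ (Fin 2) := c₀ with hy₁def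
  set y₂ : EuclideanSpace ℝ (Fin 2) := c₀ + (r₀ / 2) • EuclideanSpace.single (0 : Fin 2) (1 : ℝ)
    with hy₂def
  have hy₂dist : dist y₂ c₀ = r₀ / 2 := by
    rw [hy₂def, dist_eq_norm, add_sub_cancel_left, norm_smul, Real.norm_eq_abs,
      EuclideanSpace.norm_single]
    simp [abs_of_nonneg (by linarith : (0:ℝ) ≤ r₀ / 2)]
  have hy₁B : y₁ ∈ B := mem_closedBall_self hr₀.le
  have hy₂B : y₂ ∈ B := by
    rw [hBdef, mem_closedBall, hy₂dist]; linarith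
  have hy12 : y₁ ≠ y₂ := by
    intro heq
    have h0 : dist y₂ c₀ = 0 := by rw [← heq, hy₁def, dist_self]
    rw [hy₂dist] at h0
    linarith
  have hy12dist : dist y₁ y₂ = r₀ / 2 := by rw [dist_comm, hy₁def]; exact hy₂dist
  set h : ℝ → ℝ := fun t => infDist y₁ (convexHull ℝ (S t)) + infDist y₂ (convexHull ℝ (S t))
    with hhdef
  have hhnn : ∀ t, 0 ≤ h t := fun t => add_nonneg infDist_nonneg infDist_nonneg
  -- key geometric lemma: no two distinct points of B can lie in the hull if all points of B
  -- are "extreme"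
  have hkey : ∀ t, (∀ q ∈ B, q ∉ convexHull ℝ (S t \ {q})) →
      ∀ z₁ z₂, z₁ ∈ convexHull ℝ (S t) → z₂ ∈ convexHull ℝ (S t) →
        z₁ ∈ B → z₂ ∈ B → z₁ ≠ z₂ → False := by
    intro t hbad2 z₁ z₂ hz₁C hz₂C hz₁B hz₂B hz12
    have hsegC : segment ℝ z₁ z₂ ⊆ convexHull ℝ (S t) :=
      (convex_convexHull ℝ _).segment_subset hz₁C hz₂C
    have hsegB : segment ℝ z₁ z₂ ⊆ B := (convex_closedBall _ _).segment_subset hz₁B hz₂B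
    have hseginf : (segment ℝ z₁ z₂).Infinite := by
      rw [segment_eq_image_lineMap]
      exact (Set.Icc_infinite (by norm_num : (0:ℝ) < 1)).image
        ((AffineMap.lineMap_injective ℝ hz12).injOn)
    obtain ⟨q, hqseg, hqS⟩ := (hseginf.diff (hSfin t)).nonempty
    have hq1 : q ∈ convexHull ℝ (S t \ {q}) := by
      rw [Set.diff_singleton_eq_self hqS]
      exact hsegC hqseg
    exact hbad2 q (hsegB hqseg) hq1
  -- if all points of B are interior then h t = 0
  have hbad1h : ∀ t, (∀ p ∈ B, p ∈ convexHull ℝ (S t \ {p})) → h t = 0 := by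
    intro t hbad1
    have h1 : infDist y₁ (convexHull ℝ (S t)) = 0 :=
      infDist_zero_of_mem (convexHull_mono diff_subset (hbad1 y₁ hy₁B))
    have h2 : infDist y₂ (convexHull ℝ (S t)) = 0 :=
      infDist_zero_of_mem (convexHull_mono diff_subset (hbad1 y₂ hy₂B))
    show infDist y₁ (convexHull ℝ (S t)) + infDist y₂ (convexHull ℝ (S t)) = 0
    rw [h1, h2, add_zero]
  -- if h t = 0 and all points of B are extreme, contradiction
  have hzero_bad2 : ∀ t, h t = 0 → (∀ q ∈ B, q ∉ convexHull ℝ (S t \ {q})) → False := by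
    intro t ht hbad2
    have ht' : infDist y₁ (convexHull ℝ (S t)) + infDist y₂ (convexHull ℝ (S t)) = 0 := ht
    have g1 : (0:ℝ) ≤ infDist y₁ (convexHull ℝ (S t)) := infDist_nonneg
    have g2 : (0:ℝ) ≤ infDist y₂ (convexHull ℝ (S t)) := infDist_nonneg
    have h1 : infDist y₁ (convexHull ℝ (S t)) = 0 := by linarith
    have h2 : infDist y₂ (convexHull ℝ (S t)) = 0 := by linarith
    have hy₁C : y₁ ∈ convexHull ℝ (S t) :=
      ((hCclosed t).mem_iff_infDist_zero (hCne t)).2 h1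
    have hy₂C : y₂ ∈ convexHull ℝ (S t) :=
      ((hCclosed t).mem_iff_infDist_zero (hCne t)).2 h2
    exact hkey t hbad2 y₁ y₂ hy₁C hy₂C hy₁B hy₂B hy12
  -- MAIN CLAIM: there is a winning time
  have hwin : ∃ t ∈ Icc (0:ℝ) 1,
      (∃ p ∈ B, p ∉ convexHull ℝ (S t \ {p})) ∧ (∃ q ∈ B, q ∈ convexHull ℝ (S t \ {q})) := by
    by_contra hno
    push_neg at hno
    -- dichotomy at each time
    have hdich : ∀ t ∈ Icc (0:ℝ) 1,
        (∀ p ∈ B, p ∈ convexHull ℝ (S t \ {p})) ∨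
        (∀ q ∈ B, q ∉ convexHull ℝ (S t \ {q})) := by
      intro t ht
      by_cases hp : ∃ p ∈ B, p ∉ convexHull ℝ (S t \ {p})
      · exact Or.inr (hno t ht hp)
      · push_neg at hp
        exact Or.inl hp
    -- at t = 1: not bad2, hence bad1, hence h 1 = 0
    have hq₁B : P2 i₀ ∈ B := hP2mem i₀
    have hq₁in : P2 i₀ ∈ convexHull ℝ (S 1 \ {P2 i₀}) := by
      refine convexHull_mono ?_ hP2in
      rintro x ⟨⟨i, rfl⟩, hx⟩
      refine ⟨⟨i, ?_, by rw [hPt1]⟩, hx⟩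
      rintro rfl
      exact hx rfl
    have hh1 : h 1 = 0 := by
      rcases hdich 1 (by norm_num) with hb1 | hb2
      · exact hbad1h 1 hb1
      · exact absurd hq₁in (hb2 _ hq₁B)
    -- the first zero time
    set Z : Set ℝ := {t | t ∈ Icc (0:ℝ) 1 ∧ h t = 0} with hZdef
    have hZ1 : (1:ℝ) ∈ Z := ⟨by norm_num, hh1⟩
    have hZne : Z.Nonempty := ⟨1, hZ1⟩
    have hZbdd : BddBelow Z := ⟨0, fun t ht => ht.1.1⟩
    set t₀ : ℝ := sInf Z with ht₀def
    have ht₀0 : 0 ≤ t₀ := le_csInf hZne fun t ht => ht.1.1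
    have ht₀1 : t₀ ≤ 1 := csInf_le hZbdd hZ1
    have ht₀Icc : t₀ ∈ Icc (0:ℝ) 1 := ⟨ht₀0, ht₀1⟩
    -- h t₀ = 0
    have hht₀ : h t₀ = 0 := by
      have hle : ∀ ε > (0:ℝ), h t₀ ≤ 2 * M * ε := by
        intro ε hε
        obtain ⟨t, htZ, htlt⟩ := (csInf_lt_iff hZbdd hZne).1
          (show sInf Z < t₀ + ε by rw [← ht₀def]; linarith)
        have ht₀le : t₀ ≤ t := csInf_le hZbdd htZ
        have habs : |t - t₀| < ε := by rw [abs_of_nonneg (by linarith)]; linarith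
        have h1 := htrans y₁ t t₀
        have h2 := htrans y₂ t t₀
        have hht : infDist y₁ (convexHull ℝ (S t)) + infDist y₂ (convexHull ℝ (S t)) = 0 :=
          htZ.2
        have g1 : (0:ℝ) ≤ infDist y₁ (convexHull ℝ (S t)) := infDist_nonneg
        have g2 : (0:ℝ) ≤ infDist y₂ (convexHull ℝ (S t)) := infDist_nonneg
        have e1 : infDist y₁ (convexHull ℝ (S t)) = 0 := by linarith
        have e2 : infDist y₂ (convexHull ℝ (S t)) = 0 := by linarith
        have hMM : M * |t - t₀| ≤ M * ε := mul_le_mul_of_nonneg_left habs.le hMpos.le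
        show infDist y₁ (convexHull ℝ (S t₀)) + infDist y₂ (convexHull ℝ (S t₀)) ≤ 2 * M * ε
        rw [e1] at h1
        rw [e2] at h2
        linarith
      by_contra hne0
      have hpos : 0 < h t₀ := lt_of_le_of_ne (hhnn t₀) (Ne.symm hne0)
      have hq := hle (h t₀ / (4 * M)) (div_pos hpos (by linarith))
      have h2 : 2 * M * (h t₀ / (4 * M)) = h t₀ / 2 := by field_simp; ring
      rw [h2] at hq
      exact absurd hq (not_le.2 (half_lt_self hpos))
    -- t₀ ≠ 0 : at time 0 we have bad2, and h 0 = 0 would contradict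
    have hS0 : S 0 = P1 '' {i | i ≠ i₀} := by
      show Pt 0 '' {i | i ≠ i₀} = _
      rw [hPt0]
    have hp₀ : P1 i₀ ∉ convexHull ℝ (S 0 \ {P1 i₀}) := by
      intro hmem
      rw [hS0] at hmem
      refine hP1ex (convexHull_mono ?_ hmem)
      rintro x ⟨⟨i, hi, rfl⟩, hx⟩
      exact ⟨⟨i, rfl⟩, hx⟩
    have hbad2_0 : ∀ q ∈ B, q ∉ convexHull ℝ (S 0 \ {q}) := by
      rcases hdich 0 (by norm_num) with hb1 | hb2
      · exact absurd (hb1 _ (hP1mem i₀)) hp₀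
      · exact hb2
    have ht₀ne : t₀ ≠ 0 := by
      intro h0
      exact hzero_bad2 0 (h0 ▸ hht₀) hbad2_0
    have ht₀pos : 0 < t₀ := lt_of_le_of_ne ht₀0 (Ne.symm ht₀ne)
    -- pick t slightly below t₀
    set ε : ℝ := r₀ / 16 with hεdef
    have hεpos : 0 < ε := by rw [hεdef]; linarith
    set δ : ℝ := min (t₀ / 2) (ε / M) with hδdef
    have hδpos : 0 < δ := lt_min (by linarith) (div_pos hεpos hMpos)
    set t : ℝ := t₀ - δ with htdef
    have hδle : δ ≤ t₀ / 2 := min_le_left _ _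
    have hδle2 : δ ≤ ε / M := min_le_right _ _
    have htIcc : t ∈ Icc (0:ℝ) 1 := ⟨by rw [htdef]; linarith, by rw [htdef]; linarith⟩
    have htlt : t < t₀ := by rw [htdef]; linarith
    have htnZ : t ∉ Z := fun htZ => absurd (csInf_le hZbdd htZ) (by rw [← ht₀def]; linarith)
    have hht : h t ≠ 0 := fun h0 => htnZ ⟨htIcc, h0⟩
    have hbad2t : ∀ q ∈ B, q ∉ convexHull ℝ (S t \ {q}) := by
      rcases hdich t htIcc with hb1 | hb2
      · exact absurd (hbad1h t hb1) hht
      · exact hb2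
    -- h t₀ = 0 gives both test points in the hull at time t₀
    have hht₀' : infDist y₁ (convexHull ℝ (S t₀)) + infDist y₂ (convexHull ℝ (S t₀)) = 0 :=
      hht₀
    have g1 : (0:ℝ) ≤ infDist y₁ (convexHull ℝ (S t₀)) := infDist_nonneg
    have g2 : (0:ℝ) ≤ infDist y₂ (convexHull ℝ (S t₀)) := infDist_nonneg
    have e1 : infDist y₁ (convexHull ℝ (S t₀)) = 0 := by linarith
    have e2 : infDist y₂ (convexHull ℝ (S t₀)) = 0 := by linarith
    -- transfer to time t
    have habs : |t₀ - t| = δ := by rw [htdef, abs_of_nonneg (by linarith)]; ring_nf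
    have hMδ : M * |t₀ - t| ≤ ε := by
      rw [habs]
      calc M * δ ≤ M * (ε / M) := mul_le_mul_of_nonneg_left hδle2 hMpos.le
        _ = ε := by field_simp
    have hinf1 : infDist y₁ (convexHull ℝ (S t)) ≤ ε := by
      have := htrans y₁ t₀ t
      rw [e1] at this; linarith
    have hinf2 : infDist y₂ (convexHull ℝ (S t)) ≤ ε := by
      have := htrans y₂ t₀ t
      rw [e2] at this; linarith
    obtain ⟨z₁, hz₁C, hz₁d⟩ := (hCcomp t).exists_infDist_eq_dist (hCne t) y₁
    obtain ⟨z₂, hz₂C, hz₂d⟩ := (hCcomp t).exists_infDist_eq_dist (hCne t) y₂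
    rw [hz₁d] at hinf1
    rw [hz₂d] at hinf2
    have hz₁B : z₁ ∈ B := by
      rw [hBdef, mem_closedBall]
      calc dist z₁ c₀ ≤ dist z₁ y₁ + dist y₁ c₀ := dist_triangle _ _ _
        _ ≤ ε + 0 := by
            rw [dist_comm z₁ y₁]
            have : dist y₁ c₀ = 0 := by rw [hy₁def, dist_self]
            linarith
        _ ≤ r₀ := by rw [hεdef]; linarith
    have hz₂B : z₂ ∈ B := by
      rw [hBdef, mem_closedBall]
      calc dist z₂ c₀ ≤ dist z₂ y₂ + dist y₂ c₀ := dist_triangle _ _ _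
        _ ≤ ε + r₀ / 2 := by rw [dist_comm z₂ y₂]; linarith [hy₂dist]
        _ ≤ r₀ := by rw [hεdef]; linarith
    have hz12 : z₁ ≠ z₂ := by
      intro hzz
      have := dist_triangle y₁ z₁ y₂
      rw [hzz] at this
      have h2 : dist z₂ y₂ = dist y₂ z₂ := dist_comm _ _
      rw [hy12dist] at this
      have : r₀ / 2 ≤ dist y₁ z₂ + dist y₂ z₂ := by
        calc r₀ / 2 ≤ dist y₁ z₂ + dist z₂ y₂ := this
          _ = dist y₁ z₂ + dist y₂ z₂ := by rw [dist_comm z₂ y₂]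
      have hq1 : dist y₁ z₂ ≤ ε := by rw [← hzz]; exact hinf1
      rw [hεdef] at *
      linarith
    exact hkey t hbad2t z₁ z₂ hz₁C hz₂C hz₁B hz₂B hz12
  -- construct the witness from the winning time
  obtain ⟨t, htIcc, ⟨p, hpB, hp⟩, ⟨q, hqB, hq⟩⟩ := hwin
  refine ⟨Pt t, ?_, p, hpB, q, hqB, ?_⟩
  · intro i _
    exact (convex_closedBall (c i) (r i)) (hP1mem i) (hP2mem i)
      (by linarith [htIcc.2]) htIcc.1 (by ring)
  · rintro ⟨-, hiff⟩
    have hpV : p ∈ hullVertices (insert p (Pt t '' {i | i ≠ i₀})) := by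
      refine ⟨mem_insert _ _, fun hmem => hp (convexHull_mono ?_ hmem)⟩
      rintro x ⟨hx, hxp⟩
      rcases hx with rfl | hx
      · exact absurd rfl hxp
      · exact ⟨hx, hxp⟩
    have hqV : q ∉ hullVertices (insert q (Pt t '' {i | i ≠ i₀})) := by
      rintro ⟨-, hqnot⟩
      refine hqnot (convexHull_mono ?_ hq)
      exact Set.diff_subset_diff_left (subset_insert _ _)
    exact hqV (hiff.mp hpV)
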